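/- The genus-zero part of the polynomials T_n is T_n^{(0)} = u_0^{n+1}/(n+1)! for every n ≥ 0, where T_n^{(0)} denotes the result of setting λ = 0 in T_n. -/

import Mathlib

open MvPolynomial

/-- The derivation `∂ₓ = Σ_{k≥0} u_{k+1} ∂/∂u_k` on `A = ℝ[u₀, u₁, …]`
(the sum is finite on each polynomial). -/
noncomputable def dx (f : MvPolynomial ℕ ℝ) : MvPolynomial ℕ ℝ :=
  ∑ᶠ k : ℕ, X (k + 1) * pderiv k f

/-- The λ-linear extension of `∂ₓ` to `A[λ]` (acting on coefficients). -/
noncomputable def dxP (p : Polynomial (MvPolynomial ℕ ℝ)) :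
    Polynomial (MvPolynomial ℕ ℝ) :=
  p.sum fun n a => Polynomial.C (dx a) * Polynomial.X ^ n

/-- `p ∈ A[λ]` has zero constant term: the constant term (in the variables `u_k`)
of every `λ`-coefficient of `p` vanishes. -/
def NoConst (p : Polynomial (MvPolynomial ℕ ℝ)) : Prop :=
  ∀ i : ℕ, coeff 0 (p.coeff i) = 0

/-- `R : ℕ → A[λ]` is the sequence of Gelfand–Dickey polynomials:
`R 0 = 1`, each `R n` for `n ≥ 1` has zero constant term, and the Lenard recursion
`(2n+1) ∂ₓ R_{n+1} = u₁ R_n + 2 u₀ ∂ₓ R_n + (λ²/4) ∂ₓ³ R_n` holds. -/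
def IsGD (R : ℕ → Polynomial (MvPolynomial ℕ ℝ)) : Prop :=
  R 0 = 1 ∧ (∀ n : ℕ, 1 ≤ n → NoConst (R n)) ∧
  ∀ n : ℕ,
    Polynomial.C (MvPolynomial.C (2 * (n : ℝ) + 1)) * dxP (R (n + 1)) =
      Polynomial.C (X 1) * R n
      + Polynomial.C (MvPolynomial.C 2 * X 0) * dxP (R n)
      + Polynomial.C (MvPolynomial.C (1 / 4 : ℝ)) * Polynomial.X ^ 2
          * dxP (dxP (dxP (R n)))

/-- `T : ℕ → A[λ]` is the sequence of antiderivatives: each `T n` has zero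
constant term and `∂ₓ T_n = u₁ · R_n`. -/
def IsT (R T : ℕ → Polynomial (MvPolynomial ℕ ℝ)) : Prop :=
  ∀ n : ℕ, NoConst (T n) ∧ dxP (T n) = Polynomial.C (X 1) * R n

/-! ### Auxiliary lemmas about `dx` -/

lemma dx_eq_sum {f : MvPolynomial ℕ ℝ} {s : Finset ℕ} (h : f.vars ⊆ s) :
    dx f = ∑ k ∈ s, X (k + 1) * pderiv k f := by
  apply finsum_eq_finset_sum_of_support_subset
  intro k hk
  by_contra hks
  have : pderiv k f = 0 := pderiv_eq_zero_of_notMem_vars (fun hkv => hks (h hkv))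
  simp [Function.mem_support, this] at hk

lemma dx_C (a : ℝ) : dx (C a) = 0 := by
  rw [dx_eq_sum (s := ∅) (by simp [vars_C])]; simp

lemma dx_zero : dx 0 = 0 := by simpa using dx_C 0

lemma dx_one : dx 1 = 0 := by simpa using dx_C 1

lemma dx_X (i : ℕ) : dx (X i : MvPolynomial ℕ ℝ) = X (i + 1) := by
  classical
  rw [dx_eq_sum (s := {i}) (by simp [vars_X])]
  simp

lemma dx_mul (f g : MvPolynomial ℕ ℝ) : dx (f * g) = dx f * g + f * dx g := by
  classical
  set s := (f * g).vars ∪ f.vars ∪ g.vars with hs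
  rw [dx_eq_sum (s := s) (by intro x hx; simp [hs]; tauto),
      dx_eq_sum (s := s) (f := f) (by intro x hx; simp [hs]; tauto),
      dx_eq_sum (s := s) (f := g) (by intro x hx; simp [hs]; tauto),
      Finset.sum_mul, Finset.mul_sum, ← Finset.sum_add_distrib]
  refine Finset.sum_congr rfl fun k _ => ?_
  rw [pderiv_mul]; ring

lemma dx_sub (f g : MvPolynomial ℕ ℝ) : dx (f - g) = dx f - dx g := by
  classical
  set s := (f - g).vars ∪ f.vars ∪ g.vars with hs
  rw [dx_eq_sum (s := s) (by intro x hx; simp [hs]; tauto),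
      dx_eq_sum (s := s) (f := f) (by intro x hx; simp [hs]; tauto),
      dx_eq_sum (s := s) (f := g) (by intro x hx; simp [hs]; tauto),
      ← Finset.sum_sub_distrib]
  refine Finset.sum_congr rfl fun k _ => ?_
  rw [map_sub]; ring

lemma dx_C_mul (a : ℝ) (f : MvPolynomial ℕ ℝ) : dx (C a * f) = C a * dx f := by
  rw [dx_mul, dx_C]; ring

lemma coeff_pderiv (i : ℕ) (m : ℕ →₀ ℕ) (f : MvPolynomial ℕ ℝ) :
    coeff m (pderiv i f) = (m i + 1 : ℝ) * coeff (m + Finsupp.single i 1) f := by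
  classical
  induction f using MvPolynomial.induction_on' with
  | add p q hp hq => simp [map_add, hp, hq, mul_add]
  | monomial s a =>
    rw [pderiv_monomial, coeff_monomial, coeff_monomial]
    split_ifs with h1 h2 h2
    · have hsi : s i = m i + 1 := by rw [h2]; simp
      rw [hsi]; push_cast; ring
    · have hsi : s i = 0 := by
        by_contra hne
        have hle : Finsupp.single i 1 ≤ s := by
          rw [Finsupp.single_le_iff]; omega
        exact h2 (by rw [← h1, tsub_add_cancel_of_le hle])
      simp [hsi]
    · exfalso
      apply h1
      rw [h2, add_tsub_cancel_right]
    · ring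

lemma coeff_eq_zero_of_not_mem_vars {f : MvPolynomial ℕ ℝ} {j : ℕ} (hj : j ∉ f.vars)
    {d : ℕ →₀ ℕ} (hd : d j ≠ 0) : coeff d f = 0 := by
  by_contra h
  exact hj ((mem_vars j).mpr ⟨d, mem_support_iff.mpr h, Finsupp.mem_support_iff.mpr hd⟩)

lemma pderiv_ne_zero_of_mem_vars {f : MvPolynomial ℕ ℝ} {i : ℕ} (hi : i ∈ f.vars) :
    pderiv i f ≠ 0 := by
  obtain ⟨d, hd, hdi⟩ := (mem_vars i).mp hi
  rw [Finsupp.mem_support_iff] at hdi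
  intro h
  have hle : Finsupp.single i 1 ≤ d := by rw [Finsupp.single_le_iff]; omega
  have h2 := coeff_pderiv i (d - Finsupp.single i 1) f
  rw [h, tsub_add_cancel_of_le hle, coeff_zero] at h2
  have hcd : coeff d f ≠ 0 := mem_support_iff.mp hd
  have hne : ((((d - Finsupp.single i 1 : ℕ →₀ ℕ) i : ℕ) : ℝ) + 1) ≠ 0 := by
    have : (0:ℝ) ≤ (((d - Finsupp.single i 1 : ℕ →₀ ℕ) i : ℕ) : ℝ) := Nat.cast_nonneg _
    linarith
  exact hcd ((mul_eq_zero.mp h2.symm).resolve_left hne)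

lemma pderiv_pderiv_eq_zero {f : MvPolynomial ℕ ℝ} {j : ℕ} (hj : j ∉ f.vars) (k : ℕ) :
    pderiv j (pderiv k f) = 0 := by
  classical
  ext m
  rw [coeff_pderiv, coeff_pderiv, coeff_zero,
      coeff_eq_zero_of_not_mem_vars hj (d := m + Finsupp.single j 1 + Finsupp.single k 1)]
  · ring
  · simp only [Finsupp.add_apply, Finsupp.single_apply]
    split_ifs <;> omega

lemma eq_C_of_vars_empty {f : MvPolynomial ℕ ℝ} (h : f.vars = ∅) :
    f = C (coeff 0 f) := by
  ext m
  by_cases hm : m = 0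
  · subst hm; simp [coeff_C]
  · rw [coeff_C, if_neg (Ne.symm hm)]
    by_contra hc
    obtain ⟨i, hi⟩ := Finsupp.support_nonempty_iff.mpr hm
    have : i ∈ f.vars := (mem_vars i).mpr ⟨m, mem_support_iff.mpr hc, hi⟩
    simp [h] at this

lemma eq_C_of_dx_eq_zero_aux :
    ∀ N (f : MvPolynomial ℕ ℝ), f.vars ⊆ Finset.range N → dx f = 0 →
      f = C (coeff 0 f) := by
  intro N
  induction N with
  | zero =>
    intro f h _
    exact eq_C_of_vars_empty (by simpa using Finset.subset_empty.mp (by simpa using h))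
  | succ N ih =>
    intro f h hdx
    have hN1 : (N + 1) ∉ f.vars := fun hv => by
      have := h hv; simp [Finset.mem_range] at this
    have hsum : dx f = ∑ k ∈ Finset.range (N + 1), X (k + 1) * pderiv k f := dx_eq_sum h
    have hpd : pderiv N f = 0 := by
      have h0 : pderiv (N + 1) (dx f) = 0 := by rw [hdx]; simp
      rw [hsum, map_sum] at h0
      have hterm : ∀ k ∈ Finset.range (N + 1),
          pderiv (N + 1) (X (k + 1) * pderiv k f)
            = if k = N then pderiv N f else 0 := by
        intro k _
        rw [pderiv_mul, pderiv_pderiv_eq_zero hN1 k, mul_zero, add_zero]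
        rcases eq_or_ne k N with rfl | hkN
        · simp [pderiv_X_self]
        · rw [pderiv_X_of_ne (by omega), if_neg hkN, zero_mul]
      rw [Finset.sum_congr rfl hterm] at h0
      simpa using h0
    have hNv : N ∉ f.vars := fun hv => pderiv_ne_zero_of_mem_vars hv hpd
    refine ih f ?_ hdx
    intro k hk
    have h1 := h hk
    simp only [Finset.mem_range] at h1 ⊢
    have : k ≠ N := fun hkN => hNv (hkN ▸ hk)
    omega

lemma eq_C_of_dx_eq_zero {f : MvPolynomial ℕ ℝ} (h : dx f = 0) :
    f = C (coeff 0 f) :=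
  eq_C_of_dx_eq_zero_aux (f.vars.sup id + 1) f
    (fun k hk => Finset.mem_range.mpr (Nat.lt_succ_of_le (Finset.le_sup (f := id) hk))) h

lemma dx_cancel {f g : MvPolynomial ℕ ℝ} (h : dx f = dx g)
    (h0 : coeff 0 f = coeff 0 g) : f = g := by
  have hz : dx (f - g) = 0 := by rw [dx_sub, h, sub_self]
  have := eq_C_of_dx_eq_zero hz
  rw [coeff_sub, h0, sub_self, map_zero] at this
  exact sub_eq_zero.mp this

lemma eval_dxP (p : Polynomial (MvPolynomial ℕ ℝ)) :
    Polynomial.eval 0 (dxP p) = dx (Polynomial.eval 0 p) := by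
  classical
  rw [← Polynomial.coeff_zero_eq_eval_zero, ← Polynomial.coeff_zero_eq_eval_zero]
  unfold dxP
  rw [Polynomial.sum_def, Polynomial.finset_sum_coeff]
  simp only [Polynomial.coeff_C_mul, Polynomial.coeff_X_pow]
  rw [Finset.sum_eq_single 0]
  · simp
  · intro b _ hb
    simp [Ne.symm hb]
  · intro h
    rw [Polynomial.notMem_support_iff.mp h, dx_zero]
    simp

lemma dx_pow_succ (m : ℕ) :
    dx (X 0 ^ (m + 1) : MvPolynomial ℕ ℝ) = C ((m : ℝ) + 1) * (X 0 ^ m * X 1) := by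
  induction m with
  | zero => simp [dx_X]
  | succ m ih =>
    have : (X 0 ^ (m + 2) : MvPolynomial ℕ ℝ) = X 0 ^ (m + 1) * X 0 := by ring
    rw [this, dx_mul, ih, dx_X]
    push_cast
    simp only [C_add, C_1]
    ring

lemma coeff_zero_C_mul_pow (a : ℝ) (n : ℕ) :
    coeff 0 (C a * X 0 ^ (n + 1) : MvPolynomial ℕ ℝ) = 0 := by
  have : coeff 0 (C a * X 0 ^ (n + 1) : MvPolynomial ℕ ℝ)
      = constantCoeff (C a * X 0 ^ (n + 1) : MvPolynomial ℕ ℝ) :=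
    (congrFun constantCoeff_eq _).symm
  rw [this, map_mul, map_pow, constantCoeff_C, constantCoeff_X]
  simp

lemma dx_G (n : ℕ) :
    dx (C (((n + 1).factorial : ℝ)⁻¹) * X 0 ^ (n + 1)) =
      C ((n.factorial : ℝ)⁻¹) * (X 0 ^ n * X 1) := by
  rw [dx_C_mul, dx_pow_succ]
  rw [← mul_assoc, ← C_mul]
  congr 2
  have h1 : ((n + 1).factorial : ℝ) = ((n : ℝ) + 1) * (n.factorial : ℝ) := by
    rw [Nat.factorial_succ]; push_cast; ring
  have h2 : ((n : ℝ) + 1) ≠ 0 := by positivity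
  have h3 : (n.factorial : ℝ) ≠ 0 := Nat.cast_ne_zero.mpr n.factorial_ne_zero
  field_simp [h1]
  exact h1.symm

lemma key_rhs (n : ℕ) :
    X 1 * (C ((n.factorial : ℝ)⁻¹) * X 0 ^ n)
      + C 2 * X 0 * dx (C ((n.factorial : ℝ)⁻¹) * X 0 ^ n)
    = C (2 * (n : ℝ) + 1) * (C ((n.factorial : ℝ)⁻¹) * (X 0 ^ n * X 1)) := by
  cases n with
  | zero => simp [dx_C_mul, dx_one]
  | succ m =>
    rw [dx_C_mul, dx_pow_succ]
    push_cast
    simp only [C_add, C_1, C_mul]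
    ring

/-- the genus-zero part of `T_n` (setting `λ = 0`) is
`u₀^{n+1} / (n+1)!`. -/
theorem T_genus_zero :
    ∀ R T : ℕ → Polynomial (MvPolynomial ℕ ℝ), IsGD R → IsT R T → ∀ n : ℕ,
      Polynomial.eval 0 (T n)
        = MvPolynomial.C (((n + 1).factorial : ℝ)⁻¹) * X 0 ^ (n + 1) := by
  intro R T hGD hT
  obtain ⟨hR0, hRnc, hrec⟩ := hGD
  have hRval : ∀ n, Polynomial.eval 0 (R n)
      = C ((n.factorial : ℝ)⁻¹) * X 0 ^ n := by
    intro n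
    induction n with
    | zero => rw [hR0]; simp
    | succ n ih =>
      have h := congrArg (Polynomial.eval 0) (hrec n)
      simp only [Polynomial.eval_mul, Polynomial.eval_add, Polynomial.eval_C,
        Polynomial.eval_pow, Polynomial.eval_X, ne_eq, OfNat.ofNat_ne_zero,
        not_false_eq_true, zero_pow, mul_zero, zero_mul, add_zero] at h
      rw [eval_dxP, eval_dxP, ih, key_rhs, ← dx_G n] at h
      have hC : (C (2 * (n : ℝ) + 1) : MvPolynomial ℕ ℝ) ≠ 0 := by
        rw [ne_eq, C_eq_zero]
        positivity
      have hdx : dx (Polynomial.eval 0 (R (n + 1)))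
          = dx (C (((n + 1).factorial : ℝ)⁻¹) * X 0 ^ (n + 1)) :=
        mul_left_cancel₀ hC h
      apply dx_cancel hdx
      rw [coeff_zero_C_mul_pow, ← Polynomial.coeff_zero_eq_eval_zero]
      exact hRnc (n + 1) (by omega) 0
  intro n
  obtain ⟨hTnc, hTdx⟩ := hT n
  have h := congrArg (Polynomial.eval 0) hTdx
  rw [eval_dxP, Polynomial.eval_mul, Polynomial.eval_C, hRval n] at h
  have hdx : dx (Polynomial.eval 0 (T n))
      = dx (C (((n + 1).factorial : ℝ)⁻¹) * X 0 ^ (n + 1)) := by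
    rw [h, dx_G n]; ring
  apply dx_cancel hdx
  rw [coeff_zero_C_mul_pow, ← Polynomial.coeff_zero_eq_eval_zero]
  exact hTnc 0
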